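/- Let f : 2^V → ℝ≥0 be monotone, submodular, and satisfy f(∅) = 0. Then the greedy algorithm that iteratively adds the element of maximal marginal gain for k steps produces a set S_k with f(S_k) ≥ (1 − (1 − 1/k)^k) · max_{|T| ≤ k} f(T) ≥ (1 − 1/e) · max_{|T| ≤ k} f(T). -/

import Mathlib

lemma telescope9 {V : Type*} [Fintype V] [DecidableEq V]
    (f : Finset V → ℝ)
    (hmono : ∀ S T : Finset V, S ⊆ T → f S ≤ f T)
    (hsub : ∀ S T : Finset V, S ⊆ T → ∀ x ∉ T,
      f (insert x T) - f T ≤ f (insert x S) - f S)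
    (A : Finset V) :
    ∀ T : Finset V, f (A ∪ T) - f A ≤ ∑ x ∈ T, (f (insert x A) - f A) := by
  intro T
  induction T using Finset.induction_on with
  | empty => simp
  | @insert a T ha ih =>
      rw [Finset.sum_insert ha]
      have h1 : A ∪ insert a T = insert a (A ∪ T) := by
        ext x; simp [or_comm, or_assoc, or_left_comm]
      rw [h1]
      by_cases haU : a ∈ A ∪ T
      · have : insert a (A ∪ T) = A ∪ T := Finset.insert_eq_self.2 haU
        rw [this]
        have h2 : 0 ≤ f (insert a A) - f A :=
          sub_nonneg.2 (hmono _ _ (Finset.subset_insert _ _))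
        linarith
      · have h2 := hsub A (A ∪ T) Finset.subset_union_left a haU
        linarith

theorem stmt9 {V : Type*} [Fintype V] [DecidableEq V]
    (f : Finset V → ℝ) (k : ℕ) (hk : 1 ≤ k)
    (hnonneg : ∀ S : Finset V, 0 ≤ f S)
    (hmono : ∀ S T : Finset V, S ⊆ T → f S ≤ f T)
    (hsub : ∀ S T : Finset V, S ⊆ T → ∀ x ∉ T,
      f (insert x T) - f T ≤ f (insert x S) - f S)
    (hempty : f ∅ = 0)
    (S : ℕ → Finset V) (hS0 : S 0 = ∅)
    (hgreedy : ∀ i < k, ∃ v ∉ S i, S (i + 1) = insert v (S i) ∧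
      ∀ w : V, f (insert w (S i)) ≤ f (insert v (S i))) :
    ∀ T : Finset V, T.card ≤ k →
      (1 - (1 - 1 / (k : ℝ)) ^ k) * f T ≤ f (S k) ∧
      (1 - 1 / Real.exp 1) * f T ≤ (1 - (1 - 1 / (k : ℝ)) ^ k) * f T := by
  intro T hT
  have hk0 : (0:ℝ) < (k:ℝ) := by exact_mod_cast hk
  have hkne : (k:ℝ) ≠ 0 := ne_of_gt hk0
  have hc : 0 ≤ 1 - 1 / (k:ℝ) := by
    rw [sub_nonneg, div_le_one hk0]; exact_mod_cast hk
  -- main induction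
  have main : ∀ i ≤ k, f T - f (S i) ≤ (1 - 1 / (k:ℝ)) ^ i * f T := by
    intro i
    induction i with
    | zero => intro _; simp [hS0, hempty]
    | succ i ih =>
        intro hik
        have hik' : i < k := hik
        have IH := ih (le_of_lt hik')
        obtain ⟨v, hv, hSv, hmax⟩ := hgreedy i hik'
        set δ := f (S (i+1)) - f (S i) with hδ
        have hδ0 : 0 ≤ δ := by
          rw [hδ, hSv]
          exact sub_nonneg.2 (hmono _ _ (Finset.subset_insert _ _))
        -- f T - f (S i) ≤ k * δ
        have key : f T - f (S i) ≤ (k:ℝ) * δ := by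
          have h1 : f T ≤ f (S i ∪ T) := hmono _ _ Finset.subset_union_right
          have h2 := telescope9 f hmono hsub (S i) T
          have h3 : ∑ x ∈ T, (f (insert x (S i)) - f (S i)) ≤ (T.card : ℝ) * δ := by
            calc ∑ x ∈ T, (f (insert x (S i)) - f (S i))
                ≤ ∑ _x ∈ T, δ := by
                  apply Finset.sum_le_sum
                  intro x _
                  rw [hδ, hSv]
                  have := hmax x
                  linarith
              _ = (T.card : ℝ) * δ := by rw [Finset.sum_const]; push_cast; ring
          have h4 : (T.card : ℝ) * δ ≤ (k:ℝ) * δ := by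
            apply mul_le_mul_of_nonneg_right _ hδ0
            exact_mod_cast hT
          linarith
        have step : f T - f (S (i+1)) ≤ (1 - 1/(k:ℝ)) * (f T - f (S i)) := by
          have : (f T - f (S i)) / (k:ℝ) ≤ δ := by
            rw [div_le_iff₀ hk0]; linarith [key]
          have expand : (1 - 1/(k:ℝ)) * (f T - f (S i))
              = (f T - f (S i)) - (f T - f (S i)) / (k:ℝ) := by
            field_simp
          rw [expand]
          have : f T - f (S (i+1)) = (f T - f (S i)) - δ := by rw [hδ]; ring
          linarith
        calc f T - f (S (i+1)) ≤ (1 - 1/(k:ℝ)) * (f T - f (S i)) := step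
          _ ≤ (1 - 1/(k:ℝ)) * ((1 - 1/(k:ℝ)) ^ i * f T) :=
              mul_le_mul_of_nonneg_left IH hc
          _ = (1 - 1/(k:ℝ)) ^ (i+1) * f T := by ring
  have h1 := main k le_rfl
  constructor
  · linarith
  · apply mul_le_mul_of_nonneg_right _ (hnonneg T)
    have hpow : (1 - 1/(k:ℝ)) ^ k ≤ 1 / Real.exp 1 := by
      have h2 : 1 - 1/(k:ℝ) ≤ Real.exp (-(1/(k:ℝ))) := by
        have := Real.add_one_le_exp (-(1/(k:ℝ)))
        linarith
      calc (1 - 1/(k:ℝ)) ^ k ≤ (Real.exp (-(1/(k:ℝ)))) ^ k :=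
            pow_le_pow_left₀ hc h2 k
        _ = Real.exp ((k:ℝ) * (-(1/(k:ℝ)))) := by
            rw [← Real.exp_nat_mul]
        _ = Real.exp (-1) := by
            congr 1; field_simp
        _ = 1 / Real.exp 1 := by
            rw [Real.exp_neg]; exact (one_div _).symm
    linarith
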